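/- Under the hypotheses of the previous deterministic setting (f L_f-smooth and bounded below by f*, ∇φ = Id − Q with φ being L_φ-smooth, λ ≥ 0, L = L_f + λL_φ, step size α = min(1/L, 1/√T)), the averaged squared Pareto-gradient satisfies (1/T)Σ_{t=0}^{T−1}‖∇f(x_t) + λ(x_t − Q(x_t))‖² ≤ (2/√T)·(f(x₀) − f* + λ·M·‖x₀ − x_T‖)·max(1, L/√T), where M = max_{x∈[x₀,x_T]} ‖x − Q(x)‖. -/

import Mathlib

open InnerProductSpace

local notation "⟪" x ", " y "⟫" => @inner ℝ _ _ x y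

lemma fderiv_apply_eq_inner_gradient {E : Type*} [NormedAddCommGroup E]
    [InnerProductSpace ℝ E] [CompleteSpace E] (F : E → ℝ) (p v : E) :
    fderiv ℝ F p v = ⟪gradient F p, v⟫ := by
  rw [gradient]
  rw [show fderiv ℝ F p = toDual ℝ E ((toDual ℝ E).symm (fderiv ℝ F p)) from
    ((toDual ℝ E).apply_symm_apply _).symm]
  simp [toDual_apply_apply]

lemma descent_lemma {E : Type*} [NormedAddCommGroup E] [InnerProductSpace ℝ E]
    [CompleteSpace E] (F : E → ℝ) (L : ℝ) (hF : Differentiable ℝ F)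
    (hLip : ∀ p q, ‖gradient F p - gradient F q‖ ≤ L * ‖p - q‖) (x y : E) :
    F y ≤ F x + ⟪gradient F x, y - x⟫ + L / 2 * ‖y - x‖ ^ 2 := by
  set v := y - x with hv
  set h : ℝ → ℝ := fun t =>
    F (x + t • v) - ⟪gradient F x, v⟫ * t - L * ‖v‖ ^ 2 / 2 * (t * t) with hh
  have hderiv : ∀ t : ℝ, HasDerivAt h
      (⟪gradient F (x + t • v), v⟫ - ⟪gradient F x, v⟫ - L * ‖v‖ ^ 2 * t) t := by
    intro t
    have hline : HasDerivAt (fun t : ℝ => x + t • v) v t := by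
      simpa using ((hasDerivAt_id t).smul_const v).const_add x
    have h1 : HasDerivAt (fun t : ℝ => F (x + t • v)) (fderiv ℝ F (x + t • v) v) t :=
      (hF (x + t • v)).hasFDerivAt.comp_hasDerivAt t hline
    rw [fderiv_apply_eq_inner_gradient] at h1
    have h2 : HasDerivAt (fun t : ℝ => ⟪gradient F x, v⟫ * t) ⟪gradient F x, v⟫ t := by
      simpa using (hasDerivAt_id t).const_mul ⟪gradient F x, v⟫
    have h3 : HasDerivAt (fun t : ℝ => L * ‖v‖ ^ 2 / 2 * (t * t))
        (L * ‖v‖ ^ 2 * t) t := by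
      have := ((hasDerivAt_id t).mul (hasDerivAt_id t)).const_mul (L * ‖v‖ ^ 2 / 2)
      simp only [id, Pi.mul_apply] at this
      exact this.congr_deriv (by ring)
    exact (h1.sub h2).sub h3
  have hanti : AntitoneOn h (Set.Icc (0:ℝ) 1) := by
    apply antitoneOn_of_deriv_nonpos (convex_Icc 0 1)
    · exact Continuous.continuousOn (by
        have : Continuous h := by
          apply Continuous.sub
          apply Continuous.sub
          · exact hF.continuous.comp (by continuity)
          · continuity
          · continuity
        exact this)
    · intro t ht
      exact ((hderiv t).differentiableAt).differentiableWithinAt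
    · intro t ht
      rw [interior_Icc] at ht
      rw [(hderiv t).deriv]
      have hkey : ⟪gradient F (x + t • v) - gradient F x, v⟫ ≤ L * ‖v‖ ^ 2 * t := by
        calc ⟪gradient F (x + t • v) - gradient F x, v⟫
            ≤ ‖gradient F (x + t • v) - gradient F x‖ * ‖v‖ := real_inner_le_norm _ _
          _ ≤ (L * ‖(x + t • v) - x‖) * ‖v‖ := by
              gcongr; exact hLip _ _
              -- fallback
          _ = L * ‖v‖ ^ 2 * t := by
              rw [add_sub_cancel_left, norm_smul, Real.norm_eq_abs,
                abs_of_pos ht.1]; ring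
      rw [inner_sub_left] at hkey
      linarith
  have := hanti (Set.mem_Icc.2 ⟨le_refl 0, zero_le_one⟩)
    (Set.mem_Icc.2 ⟨zero_le_one, le_refl 1⟩) zero_le_one
  simp only [hh, zero_smul, add_zero, one_smul, mul_zero, mul_one, sub_zero] at this
  have hy : x + v = y := by rw [hv]; abel
  rw [hy] at this
  linarith

theorem stmt_8 {d : ℕ} (f φ : EuclideanSpace ℝ (Fin d) → ℝ)
    (Q : EuclideanSpace ℝ (Fin d) → EuclideanSpace ℝ (Fin d))
    (Lf Lφ lam L : ℝ) (fstar : ℝ) (T : ℕ) (hT : 1 ≤ T)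
    (hfd : Differentiable ℝ f) (hφd : Differentiable ℝ φ)
    (hLf : ∀ x y, ‖gradient f x - gradient f y‖ ≤ Lf * ‖x - y‖)
    (hLφ : ∀ x y, ‖gradient φ x - gradient φ y‖ ≤ Lφ * ‖x - y‖)
    (hfbdd : ∀ x, fstar ≤ f x)
    (hgradφ : ∀ x, gradient φ x = x - Q x)
    (hlam : 0 ≤ lam) (hLdef : L = Lf + lam * Lφ) (hL : 0 < L)
    (α : ℝ) (hα : α = min (1 / L) (1 / Real.sqrt T))
    (x : ℕ → EuclideanSpace ℝ (Fin d))
    (hx : ∀ t, x (t + 1) = x t - α • (gradient f (x t) + lam • (x t - Q (x t))))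
    (M : ℝ)
    (hM : IsGreatest ((fun z => ‖z - Q z‖) '' segment ℝ (x 0) (x T)) M) :
    (1 / (T : ℝ)) * ∑ t ∈ Finset.range T, ‖gradient f (x t) + lam • (x t - Q (x t))‖^2
      ≤ (2 / Real.sqrt T) * (f (x 0) - fstar + lam * M * ‖x 0 - x T‖)
          * max 1 (L / Real.sqrt T) := by
  have hT0 : (0:ℝ) < T := by exact_mod_cast hT
  have hs0 : 0 < Real.sqrt T := Real.sqrt_pos.2 hT0
  have hss : Real.sqrt T * Real.sqrt T = T := Real.mul_self_sqrt hT0.le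
  set Fn : EuclideanSpace ℝ (Fin d) → ℝ := fun z => f z + lam * φ z with hFn
  have hFd : Differentiable ℝ Fn := hfd.add (hφd.const_mul lam)
  have hgrad : ∀ z, gradient Fn z = gradient f z + lam • (z - Q z) := by
    intro z
    have h1 : HasFDerivAt Fn (fderiv ℝ f z + lam • fderiv ℝ φ z) z :=
      (hfd z).hasFDerivAt.add ((hφd z).hasFDerivAt.const_mul lam)
    have := h1.hasGradientAt.gradient
    rw [this, map_add, map_smul, ← hgradφ z]
    rfl
  have hLipF : ∀ p q, ‖gradient Fn p - gradient Fn q‖ ≤ L * ‖p - q‖ := by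
    intro p q
    rw [hgrad p, hgrad q]
    have heq : gradient f p + lam • (p - Q p) - (gradient f q + lam • (q - Q q))
        = (gradient f p - gradient f q) + lam • ((p - Q p) - (q - Q q)) := by
      module
    rw [heq]
    calc ‖(gradient f p - gradient f q) + lam • ((p - Q p) - (q - Q q))‖
        ≤ ‖gradient f p - gradient f q‖ + ‖lam • ((p - Q p) - (q - Q q))‖ :=
          norm_add_le _ _
      _ ≤ Lf * ‖p - q‖ + lam * (Lφ * ‖p - q‖) := by
          apply add_le_add (hLf p q)
          rw [norm_smul, Real.norm_eq_abs, abs_of_nonneg hlam]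
          apply mul_le_mul_of_nonneg_left _ hlam
          rw [← hgradφ p, ← hgradφ q]; exact hLφ p q
      _ = L * ‖p - q‖ := by rw [hLdef]; ring
  set g : ℕ → EuclideanSpace ℝ (Fin d) :=
    fun t => gradient f (x t) + lam • (x t - Q (x t)) with hg
  have hα0 : 0 < α := by
    rw [hα]; exact lt_min (by positivity) (by positivity)
  have hαL : α * L ≤ 1 := by
    have : α ≤ 1 / L := by rw [hα]; exact min_le_left _ _
    calc α * L ≤ (1 / L) * L := by gcongr
      _ = 1 := by field_simp
  have hstep : ∀ t, α / 2 * ‖g t‖ ^ 2 ≤ Fn (x t) - Fn (x (t + 1)) := by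
    intro t
    have hd := descent_lemma Fn L hFd hLipF (x t) (x (t + 1))
    have hdiff : x (t + 1) - x t = -(α • g t) := by rw [hx t]; abel
    rw [hdiff, hgrad] at hd
    have hinner : ⟪g t, -(α • g t)⟫ = -(α * ‖g t‖ ^ 2) := by
      rw [inner_neg_right, real_inner_smul_right, real_inner_self_eq_norm_sq]
    have hnorm : ‖-(α • g t)‖ ^ 2 = α ^ 2 * ‖g t‖ ^ 2 := by
      rw [norm_neg, norm_smul, Real.norm_eq_abs, abs_of_pos hα0, mul_pow]
    rw [hinner, hnorm] at hd
    nlinarith [sq_nonneg ‖g t‖, hα0, hαL]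
  have htel : α / 2 * ∑ t ∈ Finset.range T, ‖g t‖ ^ 2 ≤ Fn (x 0) - Fn (x T) := by
    calc α / 2 * ∑ t ∈ Finset.range T, ‖g t‖ ^ 2
        = ∑ t ∈ Finset.range T, α / 2 * ‖g t‖ ^ 2 := Finset.mul_sum _ _ _
      _ ≤ ∑ t ∈ Finset.range T, (Fn (x t) - Fn (x (t + 1))) :=
          Finset.sum_le_sum fun t _ => hstep t
      _ = Fn (x 0) - Fn (x T) := Finset.sum_range_sub' (fun t => Fn (x t)) T
  have hphi : φ (x 0) - φ (x T) ≤ M * ‖x 0 - x T‖ := by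
    have hb : ∀ z ∈ segment ℝ (x 0) (x T), ‖fderiv ℝ φ z‖ ≤ M := by
      intro z hz
      have : ‖fderiv ℝ φ z‖ = ‖gradient φ z‖ := by
        rw [gradient]
        exact ((toDual ℝ (EuclideanSpace ℝ (Fin d))).symm.norm_map _).symm
      rw [this, hgradφ]
      exact hM.2 ⟨z, hz, rfl⟩
    have := (convex_segment (x 0) (x T)).norm_image_sub_le_of_norm_fderiv_le
      (fun z _ => hφd z) hb (right_mem_segment ℝ (x 0) (x T))
      (left_mem_segment ℝ (x 0) (x T))
    calc φ (x 0) - φ (x T) ≤ ‖φ (x 0) - φ (x T)‖ := le_abs_self _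
      _ ≤ M * ‖x 0 - x T‖ := this
  set Δ : ℝ := f (x 0) - fstar + lam * M * ‖x 0 - x T‖ with hΔ
  have hFnΔ : Fn (x 0) - Fn (x T) ≤ Δ := by
    have h1 : f (x 0) - f (x T) ≤ f (x 0) - fstar := by linarith [hfbdd (x T)]
    have h2 : lam * (φ (x 0) - φ (x T)) ≤ lam * (M * ‖x 0 - x T‖) :=
      mul_le_mul_of_nonneg_left hphi hlam
    simp only [hFn, hΔ]
    nlinarith
  set m : ℝ := max L (Real.sqrt T) with hm
  have hm0 : 0 < m := lt_of_lt_of_le hL (le_max_left _ _)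
  have hαm : α = 1 / m := by
    rw [hα, hm]
    rcases le_total L (Real.sqrt T) with h | h
    · rw [min_eq_right (one_div_le_one_div_of_le hL h), max_eq_right h]
    · rw [min_eq_left (one_div_le_one_div_of_le hs0 h), max_eq_left h]
  have hS : ∑ t ∈ Finset.range T, ‖g t‖ ^ 2 ≤ 2 * m * Δ := by
    have h1 : α / 2 * ∑ t ∈ Finset.range T, ‖g t‖ ^ 2 ≤ Δ := le_trans htel hFnΔ
    rw [hαm] at h1
    rw [div_div] at h1
    calc ∑ t ∈ Finset.range T, ‖g t‖ ^ 2
        = (2 * m) * (1 / (m * 2) * ∑ t ∈ Finset.range T, ‖g t‖ ^ 2) := by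
          field_simp
      _ ≤ (2 * m) * Δ := mul_le_mul_of_nonneg_left h1 (by positivity)
  have hmaxeq : max 1 (L / Real.sqrt T) = m / Real.sqrt T := by
    rw [hm]
    rcases le_total L (Real.sqrt T) with h | h
    · rw [max_eq_left ((div_le_one hs0).2 h), max_eq_right h, div_self hs0.ne']
    · rw [max_eq_right ((one_le_div hs0).2 h), max_eq_left h]
  rw [hmaxeq]
  have hfin : (1 / (T:ℝ)) * ∑ t ∈ Finset.range T, ‖g t‖ ^ 2
      ≤ (1 / (T:ℝ)) * (2 * m * Δ) := by
    apply mul_le_mul_of_nonneg_left hS (by positivity)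
  calc (1 / (T:ℝ)) * ∑ t ∈ Finset.range T, ‖g t‖ ^ 2
      ≤ (1 / (T:ℝ)) * (2 * m * Δ) := hfin
    _ = 2 / Real.sqrt T * Δ * (m / Real.sqrt T) := by
        rw [← hss]; field_simp; rw [Real.sqrt_sq hs0.le]; ring
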